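/- With E′ the ideal of W generated by T₂ − 3·1, T₃ − 4·1, T₇ − 8·1, T₁₁ − 12·1, T₁₉ − 20·1, T₂₉ − 30·1, the elements T₅ − 29·1 and T₁₃ − 13·1 lie in E′, where T₅ = (−1, 1, −1) and T₁₃ = (−1, −1, 1); equivalently, the images of T₅ and T₁₃ in W/E′ ≅ ℤ/84ℤ ≅ ℤ/4ℤ × ℤ/3ℤ × ℤ/7ℤ are 29 and 13, i.e. the triples (1, −1, 1) and (1, 1, −1) respectively. -/

import Mathlib

abbrev Rng : Type := ℤ × Zsqrtd 2 × Zsqrtd 3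

def Wset : Set Rng :=
  {p | p.1 ≡ p.2.1.re [ZMOD 2] ∧ p.1 ≡ p.2.2.re + p.2.2.im [ZMOD 2] ∧
       p.2.1.im ≡ p.2.2.im [ZMOD 2]}

private lemma modeq_iff (a b : ℤ) : a ≡ b [ZMOD 2] ↔ ((a : ZMod 2) = b) :=
  (ZMod.intCast_eq_intCast_iff a b 2).symm

def W : Subring Rng where
  carrier := Wset
  zero_mem' := by refine ⟨?_, ?_, ?_⟩ <;> decide
  one_mem' := by refine ⟨?_, ?_, ?_⟩ <;> decide
  add_mem' := by
    rintro a b ⟨h1, h2, h3⟩ ⟨g1, g2, g3⟩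
    refine ⟨h1.add g1, ?_, h3.add g3⟩
    simpa [add_add_add_comm] using h2.add g2
  neg_mem' := by
    rintro a ⟨h1, h2, h3⟩
    refine ⟨h1.neg, ?_, h3.neg⟩
    have := h2.neg
    simp only [Wset, Set.mem_setOf_eq, Prod.fst_neg, Prod.snd_neg, Zsqrtd.re_neg,
      Zsqrtd.im_neg, Int.modEq_iff_dvd] at this ⊢
    omega
  mul_mem' := by
    rintro a b ⟨h1, h2, h3⟩ ⟨g1, g2, g3⟩
    simp only [Wset, Set.mem_setOf_eq, Prod.fst_mul, Prod.snd_mul, Zsqrtd.re_mul,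
      Zsqrtd.im_mul, modeq_iff] at h1 h2 h3 g1 g2 g3 ⊢
    push_cast at h1 h2 h3 g1 g2 g3 ⊢
    have h0 : (2 : ZMod 2) = 0 := rfl
    refine ⟨?_, ?_, ?_⟩
    · rw [← h1, ← g1, h0]; ring
    · linear_combination (b.1 : ZMod 2) * h2 + ((a.2.2.re : ZMod 2) + a.2.2.im) * g2 -
        ((a.2.2.im : ZMod 2) * b.2.2.im) * h0
    · linear_combination (b.2.1.im : ZMod 2) * h2 - (b.2.1.im : ZMod 2) * h1
        + (b.2.1.re : ZMod 2) * h3 + ((a.2.2.re : ZMod 2) + a.2.2.im) * g3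
        + (a.2.2.im : ZMod 2) * g2 - (a.2.2.im : ZMod 2) * g1
        + ((a.2.2.im : ZMod 2) * b.2.2.im) * h0

lemma mem_W_iff (x : Rng) : x ∈ W ↔ x ∈ Wset := Iff.rfl

/-- `T₂ = (−1, −1+√2, √3)` as an element of `W`. -/
def T2w : W :=
  ⟨((-1 : ℤ), (⟨-1, 1⟩ : Zsqrtd 2), (⟨0, 1⟩ : Zsqrtd 3)), by
    rw [mem_W_iff]; refine ⟨?_, ?_, ?_⟩ <;> decide⟩

/-- `T₃ = (−2, √2, 1−√3)` as an element of `W`. -/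
def T3w : W :=
  ⟨((-2 : ℤ), (⟨0, 1⟩ : Zsqrtd 2), (⟨1, -1⟩ : Zsqrtd 3)), by
    rw [mem_W_iff]; refine ⟨?_, ?_, ?_⟩ <;> decide⟩

/-- `T₇ = (−4, 2−2√2, 2)` as an element of `W`. -/
def T7w : W :=
  ⟨((-4 : ℤ), (⟨2, -2⟩ : Zsqrtd 2), (⟨2, 0⟩ : Zsqrtd 3)), by
    rw [mem_W_iff]; refine ⟨?_, ?_, ?_⟩ <;> decide⟩

/-- `T₁₁ = (2, 2−√2, −3+√3)` as an element of `W`. -/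
def T11w : W :=
  ⟨((2 : ℤ), (⟨2, -1⟩ : Zsqrtd 2), (⟨-3, 1⟩ : Zsqrtd 3)), by
    rw [mem_W_iff]; refine ⟨?_, ?_, ?_⟩ <;> decide⟩

/-- `T₁₉ = (−6, 2+√2, −1+3√3)` as an element of `W`. -/
def T19w : W :=
  ⟨((-6 : ℤ), (⟨2, 1⟩ : Zsqrtd 2), (⟨-1, 3⟩ : Zsqrtd 3)), by
    rw [mem_W_iff]; refine ⟨?_, ?_, ?_⟩ <;> decide⟩

/-- `T₂₉ = (2, 4√2, −6−2√3)` as an element of `W`. -/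
def T29w : W :=
  ⟨((2 : ℤ), (⟨0, 4⟩ : Zsqrtd 2), (⟨-6, -2⟩ : Zsqrtd 3)), by
    rw [mem_W_iff]; refine ⟨?_, ?_, ?_⟩ <;> decide⟩

/-- The ideal `E′` of `W` generated by `T₂ − 3, T₃ − 4, T₇ − 8, T₁₁ − 12, T₁₉ − 20,
T₂₉ − 30` (i.e. by the elements `T_ℓ − (ℓ+1)·1`). -/
def Eis : Ideal W :=
  Ideal.span {T2w - 3, T3w - 4, T7w - 8, T11w - 12, T19w - 20, T29w - 30}

/-- `T₅ = (−1, 1, −1)` as an element of `W`. -/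
def T5w : W :=
  ⟨((-1 : ℤ), (⟨1, 0⟩ : Zsqrtd 2), (⟨-1, 0⟩ : Zsqrtd 3)), by
    rw [mem_W_iff]; refine ⟨?_, ?_, ?_⟩ <;> decide⟩

/-- `T₁₃ = (−1, −1, 1)` as an element of `W`. -/
def T13w : W :=
  ⟨((-1 : ℤ), (⟨-1, 0⟩ : Zsqrtd 2), (⟨1, 0⟩ : Zsqrtd 3)), by
    rw [mem_W_iff]; refine ⟨?_, ?_, ?_⟩ <;> decide⟩

private def c1a : W := ⟨((9 : ℤ), (⟨9, 58⟩ : Zsqrtd 2), (⟨9, -14⟩ : Zsqrtd 3)), by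
  rw [mem_W_iff]; refine ⟨?_, ?_, ?_⟩ <;> decide⟩
private def c2a : W := ⟨((87 : ℤ), (⟨87, -12⟩ : Zsqrtd 2), (⟨87, -12⟩ : Zsqrtd 3)), by
  rw [mem_W_iff]; refine ⟨?_, ?_, ?_⟩ <;> decide⟩
private def c1b : W := ⟨((5 : ℤ), (⟨5, 20⟩ : Zsqrtd 2), (⟨5, -4⟩ : Zsqrtd 3)), by
  rw [mem_W_iff]; refine ⟨?_, ?_, ?_⟩ <;> decide⟩
private def c2b : W := ⟨((29 : ℤ), (⟨29, -4⟩ : Zsqrtd 2), (⟨29, -4⟩ : Zsqrtd 3)), by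
  rw [mem_W_iff]; refine ⟨?_, ?_, ?_⟩ <;> decide⟩

private lemma g2_mem : T2w - 3 ∈ Eis := Ideal.subset_span (by simp)
private lemma g3_mem : T3w - 4 ∈ Eis := Ideal.subset_span (by simp)
private lemma g7_mem : T7w - 8 ∈ Eis := Ideal.subset_span (by simp)

/-- `T₅ − 29·1` and `T₁₃ − 13·1` lie in the Eisenstein ideal `E′`; equivalently, the
images of `T₅` and `T₁₃` in `W/E′ ≅ ℤ/84ℤ` are `29` and `13`. -/
theorem stmt12 : T5w - 29 ∈ Eis ∧ T13w - 13 ∈ Eis := by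
  constructor
  · have h : T5w - 29 = c1a * (T2w - 3) + c2a * (T3w - 4) + (-44) * (T7w - 8) := by
      apply Subtype.ext; decide
    rw [h]
    exact Ideal.add_mem _ (Ideal.add_mem _ (Ideal.mul_mem_left _ _ g2_mem)
      (Ideal.mul_mem_left _ _ g3_mem)) (Ideal.mul_mem_left _ _ g7_mem)
  · have h : T13w - 13 = c1b * (T2w - 3) + c2b * (T3w - 4) + (-15) * (T7w - 8) := by
      apply Subtype.ext; decide
    rw [h]
    exact Ideal.add_mem _ (Ideal.add_mem _ (Ideal.mul_mem_left _ _ g2_mem)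
      (Ideal.mul_mem_left _ _ g3_mem)) (Ideal.mul_mem_left _ _ g7_mem)
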